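/- Let H be a real inner product space with norms ‖·‖_c and ‖·‖ satisfying ‖w‖_c² ≥ (1/c_max)‖w‖² for all w, and let a be a symmetric nonnegative bilinear form satisfying the inverse inequality a(w,w) ≤ C_inv² H⁻² ‖w‖² on a subspace V_ms. Suppose the CFL condition 1/c_max − (1/4)C_inv² H⁻² (Δt)² ≥ δ holds with δ > 0. Then for any u, v ∈ V_ms, the discrete energy 𝓔 := ‖(u − v)/Δt‖_c² + (1/2)a(u, v) satisfies 𝓔 ≥ δ‖(u − v)/Δt‖² + (1/4)(a(u,u) + a(v,v)) ≥ 0. -/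
import Mathlib


/-- positivity of the discrete energy under the CFL condition. -/
theorem stmt_12 {H : Type*} [NormedAddCommGroup H] [InnerProductSpace ℝ H]
    (c a : H →ₗ[ℝ] H →ₗ[ℝ] ℝ)
    (hcsymm : ∀ x y : H, c x y = c y x) (hasymm : ∀ x y : H, a x y = a y x)
    (hannn : ∀ w : H, 0 ≤ a w w)
    (cmax Cinv Hm Δt δ : ℝ)
    (hcmax : 0 < cmax) (hCinv : 0 < Cinv) (hHm : 0 < Hm) (hΔt : 0 < Δt)
    (hδ : 0 < δ)
    (hc : ∀ w : H, (1 / cmax) * ‖w‖ ^ 2 ≤ c w w)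
    (Vms : Submodule ℝ H)
    (hinv : ∀ w ∈ Vms, a w w ≤ Cinv ^ 2 * (1 / Hm ^ 2) * ‖w‖ ^ 2)
    (hCFL : 1 / cmax - (1 / 4) * Cinv ^ 2 * (1 / Hm ^ 2) * Δt ^ 2 ≥ δ)
    (u v : H) (hu : u ∈ Vms) (hv : v ∈ Vms) :
    c (Δt⁻¹ • (u - v)) (Δt⁻¹ • (u - v)) + (1 / 2) * a u v ≥
      δ * ‖Δt⁻¹ • (u - v)‖ ^ 2 + (1 / 4) * (a u u + a v v) ∧
    δ * ‖Δt⁻¹ • (u - v)‖ ^ 2 + (1 / 4) * (a u u + a v v) ≥ 0 := by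
  set w : H := Δt⁻¹ • (u - v) with hw
  have hwm : w ∈ Vms := Vms.smul_mem _ (Vms.sub_mem hu hv)
  have haw : a w w = Δt⁻¹ ^ 2 * a (u - v) (u - v) := by
    simp only [hw, map_smul, LinearMap.smul_apply, smul_eq_mul]
    ring
  have hexp : a (u - v) (u - v) = a u u - 2 * a u v + a v v := by
    simp only [map_sub, LinearMap.sub_apply]
    rw [hasymm v u]; ring
  have h1 : a (u - v) (u - v) = Δt ^ 2 * a w w := by
    rw [haw]; field_simp
  have h2 : a w w ≤ Cinv ^ 2 * (1 / Hm ^ 2) * ‖w‖ ^ 2 := hinv w hwm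
  have h3 := hc w
  have h4 : (0:ℝ) ≤ ‖w‖ ^ 2 := by positivity
  have h5 : 0 < Δt ^ 2 := by positivity
  constructor
  · nlinarith [mul_le_mul_of_nonneg_left h2 (le_of_lt h5)]
  · nlinarith [hannn u, hannn v]
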